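/- Let μ̃ be a probability measure on ℤ such that the random walk p̃(k,l) = μ̃(l−k) on ℤ is irreducible, and let φ(c) = ∑_{n∈ℤ} μ̃(n)e^{cn}. If there exists c₀ ≠ 0 with φ(c₀) = 1, then the positive p̃-harmonic functions f on ℤ with f(0) = 1 are precisely the functions f(m) = t + (1−t)e^{c₀ m} with t ∈ [0,1]. If c = 0 is the only real solution of φ(c) = 1, then every positive p̃-harmonic function on ℤ is constant. -/

import Mathlib

open Filter Topology ENNReal

/-! ### Generic Markov chain notions -/

/-- `p` is a transition matrix: nonnegative entries, rows summing to `1`. -/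
def IsTransMat {X : Type*} (p : X → X → ℝ) : Prop :=
  (∀ x y, 0 ≤ p x y) ∧ ∀ x, HasSum (fun y => p x y) 1

open Classical in
/-- `n`-step transition probabilities. -/
noncomputable def pstep {X : Type*} (p : X → X → ℝ) : ℕ → X → X → ℝ
  | 0, x, y => if x = y then 1 else 0
  | n + 1, x, y => ∑' z, pstep p n x z * p z y

/-- Irreducibility: any state can be reached from any state. -/
def IsIrredMat {X : Type*} (p : X → X → ℝ) : Prop :=
  ∀ x y, ∃ n : ℕ, 0 < pstep p n x y

/-- Green kernel, valued in `[0,∞]`. -/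
noncomputable def Green {X : Type*} (p : X → X → ℝ) (x y : X) : ℝ≥0∞ :=
  ∑' n : ℕ, ENNReal.ofReal (pstep p n x y)

/-- Transience: the Green kernel is everywhere finite. -/
def IsTransient {X : Type*} (p : X → X → ℝ) : Prop :=
  ∀ x y, Green p x y ≠ ⊤

/-- Martin kernel with respect to a root `o`. -/
noncomputable def Martin {X : Type*} (p : X → X → ℝ) (o x y : X) : ℝ :=
  (Green p x y).toReal / (Green p o y).toReal

/-- Harmonic function: `∑_y p(x,y) h(y)` converges (absolutely) to `h(x)` for all `x`. -/
def IsHarmonic {X : Type*} (p : X → X → ℝ) (h : X → ℝ) : Prop :=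
  ∀ x, HasSum (fun y => p x y * h y) (h x)

/-- Minimal positive harmonic function, normalized at the root `o`. -/
def IsMinimalHarmonic {X : Type*} (p : X → X → ℝ) (o : X) (h : X → ℝ) : Prop :=
  IsHarmonic p h ∧ (∀ x, 0 < h x) ∧ h o = 1 ∧
    ∀ h₁ : X → ℝ, IsHarmonic p h₁ → (∀ x, 0 < h₁ x) → (∀ x, h₁ x ≤ h x) →
      ∃ c : ℝ, ∀ x, h₁ x = c * h x

namespace PHZ


/-- ENNReal version of a nonneg HasSum. -/
lemma ofReal_tsum_eq {g : ℤ → ℝ} (hg : ∀ y, 0 ≤ g y) {S : ℝ} (h : HasSum g S) :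
    ∑' y, ENNReal.ofReal (g y) = ENNReal.ofReal S := by
  rw [← ENNReal.ofReal_tsum_of_nonneg hg h.summable, h.tsum_eq]

variable {μ : ℤ → ℝ}

/-- the random walk kernel -/
noncomputable abbrev P (μ : ℤ → ℝ) : ℤ → ℤ → ℝ := fun k l => μ (l - k)

lemma mu_le_one (hμ0 : ∀ n, 0 ≤ μ n) (hμ1 : HasSum μ 1) (n : ℤ) : μ n ≤ 1 :=
  le_hasSum hμ1 n (fun j _ => hμ0 j)

lemma hasSum_row (hμ1 : HasSum μ 1) (x : ℤ) : HasSum (fun y => μ (y - x)) 1 := by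
  have := (Equiv.subRight x).hasSum_iff (f := μ) (a := 1)
  exact this.mpr hμ1

lemma pstep_nonneg (hμ0 : ∀ n, 0 ≤ μ n) : ∀ n x y, 0 ≤ pstep (P μ) n x y := by
  intro n
  induction n with
  | zero => intro x y; simp only [pstep]; split <;> norm_num
  | succ n ih =>
    intro x y
    simp only [pstep]
    exact tsum_nonneg (fun z => mul_nonneg (ih x z) (hμ0 _))

lemma pstep_rowsum (hμ0 : ∀ n, 0 ≤ μ n) (hμ1 : HasSum μ 1) :
    ∀ n x, HasSum (fun y => pstep (P μ) n x y) 1 := by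
  intro n
  induction n with
  | zero =>
    intro x
    have : ∀ y, y ≠ x → (pstep (P μ) 0 x y) = 0 := by
      intro y hy; simp only [pstep]; rw [if_neg (fun h => hy h.symm)]
    have h2 := hasSum_single (f := fun y => pstep (P μ) 0 x y) x this
    simpa [pstep] using h2
  | succ n ih =>
    intro x
    have hsummand : ∀ y, Summable (fun z => pstep (P μ) n x z * μ (y - z)) := by
      intro y
      apply Summable.of_nonneg_of_le
        (fun z => mul_nonneg (pstep_nonneg hμ0 n x z) (hμ0 _))
        (fun z => ?_) (ih x).summable
      calc pstep (P μ) n x z * μ (y - z) ≤ pstep (P μ) n x z * 1 :=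
            mul_le_mul_of_nonneg_left (mu_le_one hμ0 hμ1 _) (pstep_nonneg hμ0 n x z)
        _ = pstep (P μ) n x z := mul_one _
    have key : ∑' y, ENNReal.ofReal (pstep (P μ) (n+1) x y) = 1 := by
      have h1 : ∀ y, ENNReal.ofReal (pstep (P μ) (n+1) x y)
          = ∑' z, ENNReal.ofReal (pstep (P μ) n x z) * ENNReal.ofReal (μ (y - z)) := by
        intro y
        have h0 : pstep (P μ) (n+1) x y = ∑' z, pstep (P μ) n x z * μ (y - z) := rfl
        rw [h0, ENNReal.ofReal_tsum_of_nonneg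
          (fun z => mul_nonneg (pstep_nonneg hμ0 n x z) (hμ0 _)) (hsummand y)]
        congr 1; funext z
        exact ENNReal.ofReal_mul (pstep_nonneg hμ0 n x z)
      calc ∑' y, ENNReal.ofReal (pstep (P μ) (n+1) x y)
          = ∑' y, ∑' z, ENNReal.ofReal (pstep (P μ) n x z) * ENNReal.ofReal (μ (y - z)) := by
            simp_rw [h1]
        _ = ∑' z, ∑' y, ENNReal.ofReal (pstep (P μ) n x z) * ENNReal.ofReal (μ (y - z)) :=
            ENNReal.tsum_comm
        _ = ∑' z, ENNReal.ofReal (pstep (P μ) n x z) * ∑' y, ENNReal.ofReal (μ (y - z)) := by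
            simp_rw [ENNReal.tsum_mul_left]
        _ = 1 := by
            have e1 : ∀ z : ℤ, ∑' y, ENNReal.ofReal (μ (y - z)) = 1 := by
              intro z
              rw [ofReal_tsum_eq (fun y => hμ0 _) (hasSum_row hμ1 z)]; norm_num
            simp_rw [e1, mul_one]
            rw [ofReal_tsum_eq (pstep_nonneg hμ0 n x) (ih x)]; norm_num
    have hsum : Summable (fun y => pstep (P μ) (n+1) x y) := by
      have hne : (∑' y, ENNReal.ofReal (pstep (P μ) (n+1) x y)) ≠ ⊤ := by
        rw [key]; exact one_ne_top
      have := ENNReal.summable_toReal hne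
      refine this.congr (fun y => ?_)
      exact ENNReal.toReal_ofReal (pstep_nonneg hμ0 _ x y)
    have heq : ∑' y, pstep (P μ) (n+1) x y = 1 := by
      have h2 := ofReal_tsum_eq (g := fun y => pstep (P μ) (n+1) x y)
        (pstep_nonneg hμ0 _ x) hsum.hasSum
      rw [key] at h2
      have h3 := congrArg ENNReal.toReal h2
      rw [ENNReal.toReal_ofReal (tsum_nonneg (fun y => pstep_nonneg hμ0 _ x y))] at h3
      simpa using h3.symm
    exact heq ▸ hsum.hasSum

lemma pstep_summand_summable (hμ0 : ∀ n, 0 ≤ μ n) (hμ1 : HasSum μ 1) (n : ℕ) (x y : ℤ) :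
    Summable (fun z => pstep (P μ) n x z * μ (y - z)) := by
  apply Summable.of_nonneg_of_le
    (fun z => mul_nonneg (pstep_nonneg hμ0 n x z) (hμ0 _))
    (fun z => ?_) (pstep_rowsum hμ0 hμ1 n x).summable
  calc pstep (P μ) n x z * μ (y - z) ≤ pstep (P μ) n x z * 1 :=
        mul_le_mul_of_nonneg_left (mu_le_one hμ0 hμ1 _) (pstep_nonneg hμ0 n x z)
    _ = pstep (P μ) n x z := mul_one _

lemma pstep_succ_ge (hμ0 : ∀ n, 0 ≤ μ n) (hμ1 : HasSum μ 1) (n : ℕ) (x z y : ℤ) :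
    pstep (P μ) n x z * μ (y - z) ≤ pstep (P μ) (n+1) x y := by
  have h0 : pstep (P μ) (n+1) x y = ∑' w, pstep (P μ) n x w * μ (y - w) := rfl
  rw [h0]
  exact le_hasSum (pstep_summand_summable hμ0 hμ1 n x y).hasSum z
    (fun w _ => mul_nonneg (pstep_nonneg hμ0 n x w) (hμ0 _))

lemma pstep_succ_exists_pos (hμ0 : ∀ n, 0 ≤ μ n) (n : ℕ) (x y : ℤ)
    (h : 0 < pstep (P μ) (n+1) x y) :
    ∃ z, 0 < pstep (P μ) n x z ∧ 0 < μ (y - z) := by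
  by_contra hc
  push_neg at hc
  have hz : ∀ z, pstep (P μ) n x z * μ (y - z) = 0 := by
    intro z
    rcases (lt_or_eq_of_le (pstep_nonneg hμ0 n x z)).symm with h1 | h1
    · simp [← h1]
    · have h2 : μ (y - z) = 0 := le_antisymm (hc z h1) (hμ0 _)
      simp [h2]
  have h0 : pstep (P μ) (n+1) x y = 0 := by
    have e : pstep (P μ) (n+1) x y = ∑' w, pstep (P μ) n x w * μ (y - w) := rfl
    rw [e]; simp [hz]
  linarith

lemma pstep_translate (t : ℤ) : ∀ n x y, pstep (P μ) n (x+t) (y+t) = pstep (P μ) n x y := by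
  intro n
  induction n with
  | zero => intro x y; simp only [pstep]; by_cases h : x = y <;> simp [h]
  | succ n ih =>
    intro x y
    show (∑' z, pstep (P μ) n (x+t) z * μ (y + t - z)) = ∑' z, pstep (P μ) n x z * μ (y - z)
    rw [← (Equiv.addRight t).tsum_eq]
    congr 1; funext w
    simp only [Equiv.coe_addRight]
    rw [ih x w]
    congr 2
    ring

lemma pstep_base (n : ℕ) (x y : ℤ) : pstep (P μ) n x y = pstep (P μ) n 0 (y - x) := by
  have := (pstep_translate (μ := μ) (-x) n x y).symm
  simpa [sub_eq_add_neg] using this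

/-! ### Normalized positive harmonic functions, superharmonicity, Harnack -/

def HH (μ : ℤ → ℝ) : Set (ℤ → ℝ) :=
  {f | (∀ x, HasSum (fun y => μ (y - x) * f y) (f x)) ∧ (∀ m, 0 < f m) ∧ f 0 = 1}

def SupH (μ : ℤ → ℝ) (g : ℤ → ℝ) : Prop :=
  (∀ m, 0 ≤ g m) ∧ ∀ x, Summable (fun y => μ (y - x) * g y) ∧ ∑' y, μ (y - x) * g y ≤ g x

lemma mem_HH_supH {f : ℤ → ℝ} (hf : f ∈ HH μ) : SupH μ f :=
  ⟨fun m => (hf.2.1 m).le, fun x => ⟨(hf.1 x).summable, le_of_eq (hf.1 x).tsum_eq⟩⟩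

lemma one_mem_HH (hμ1 : HasSum μ 1) : (fun _ : ℤ => (1:ℝ)) ∈ HH μ := by
  refine ⟨fun x => ?_, fun m => one_pos, rfl⟩
  simpa using hasSum_row hμ1 x

lemma ofReal_pstep_succ (hμ0 : ∀ n, 0 ≤ μ n) (hμ1 : HasSum μ 1) (n : ℕ) (x y : ℤ) :
    ENNReal.ofReal (pstep (P μ) (n+1) x y)
      = ∑' z, ENNReal.ofReal (pstep (P μ) n x z) * ENNReal.ofReal (μ (y - z)) := by
  have h0 : pstep (P μ) (n+1) x y = ∑' z, pstep (P μ) n x z * μ (y - z) := rfl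
  rw [h0, ENNReal.ofReal_tsum_of_nonneg
    (fun z => mul_nonneg (pstep_nonneg hμ0 n x z) (hμ0 _))
    (pstep_summand_summable hμ0 hμ1 n x y)]
  congr 1; funext z
  exact ENNReal.ofReal_mul (pstep_nonneg hμ0 n x z)

lemma supH_ofReal (hμ0 : ∀ n, 0 ≤ μ n) {g : ℤ → ℝ} (hg : SupH μ g) (x : ℤ) :
    ∑' y, ENNReal.ofReal (μ (y - x)) * ENNReal.ofReal (g y) ≤ ENNReal.ofReal (g x) := by
  have h1 : ∀ y : ℤ, ENNReal.ofReal (μ (y - x)) * ENNReal.ofReal (g y)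
      = ENNReal.ofReal (μ (y - x) * g y) := fun y => (ENNReal.ofReal_mul (hμ0 _)).symm
  calc ∑' y, ENNReal.ofReal (μ (y - x)) * ENNReal.ofReal (g y)
      = ∑' y, ENNReal.ofReal (μ (y - x) * g y) := by simp_rw [h1]
    _ = ENNReal.ofReal (∑' y, μ (y - x) * g y) :=
        ofReal_tsum_eq (fun y => mul_nonneg (hμ0 _) (hg.1 y)) (hg.2 x).1.hasSum
    _ ≤ ENNReal.ofReal (g x) := ENNReal.ofReal_le_ofReal (hg.2 x).2

lemma supH_pstep (hμ0 : ∀ n, 0 ≤ μ n) (hμ1 : HasSum μ 1) {g : ℤ → ℝ} (hg : SupH μ g) :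
    ∀ n x, ∑' y, ENNReal.ofReal (pstep (P μ) n x y) * ENNReal.ofReal (g y)
      ≤ ENNReal.ofReal (g x) := by
  intro n
  induction n with
  | zero =>
    intro x
    have h0 : ∀ y : ℤ, y ≠ x →
        ENNReal.ofReal (pstep (P μ) 0 x y) * ENNReal.ofReal (g y) = 0 := by
      intro y hy
      have : pstep (P μ) 0 x y = 0 := by
        simp only [pstep]; rw [if_neg (fun h => hy h.symm)]
      simp [this]
    rw [tsum_eq_single x h0]
    have h2 : pstep (P μ) 0 x x = 1 := by simp [pstep]
    simp [h2]
  | succ n ih =>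
    intro x
    calc ∑' y, ENNReal.ofReal (pstep (P μ) (n+1) x y) * ENNReal.ofReal (g y)
        = ∑' y, ∑' z, ENNReal.ofReal (pstep (P μ) n x z) * ENNReal.ofReal (μ (y - z))
            * ENNReal.ofReal (g y) := by
          congr 1; funext y
          rw [ofReal_pstep_succ hμ0 hμ1 n x y, ENNReal.tsum_mul_right]
      _ = ∑' z, ∑' y, ENNReal.ofReal (pstep (P μ) n x z) * ENNReal.ofReal (μ (y - z))
            * ENNReal.ofReal (g y) := ENNReal.tsum_comm
      _ = ∑' z, ENNReal.ofReal (pstep (P μ) n x z)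
            * ∑' y, ENNReal.ofReal (μ (y - z)) * ENNReal.ofReal (g y) := by
          congr 1; funext z
          rw [← ENNReal.tsum_mul_left]
          congr 1; funext y; ring
      _ ≤ ∑' z, ENNReal.ofReal (pstep (P μ) n x z) * ENNReal.ofReal (g z) :=
          ENNReal.tsum_le_tsum (fun z => mul_le_mul_right (supH_ofReal hμ0 hg z) _)
      _ ≤ ENNReal.ofReal (g x) := ih x

lemma supH_harnack (hμ0 : ∀ n, 0 ≤ μ n) (hμ1 : HasSum μ 1) {g : ℤ → ℝ} (hg : SupH μ g)
    (n : ℕ) (x y : ℤ) : pstep (P μ) n x y * g y ≤ g x := by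
  have h1 : ENNReal.ofReal (pstep (P μ) n x y) * ENNReal.ofReal (g y)
      ≤ ENNReal.ofReal (g x) :=
    le_trans (ENNReal.le_tsum y) (supH_pstep hμ0 hμ1 hg n x)
  rw [← ENNReal.ofReal_mul (pstep_nonneg hμ0 n x y)] at h1
  exact (ENNReal.ofReal_le_ofReal_iff (hg.1 x)).mp h1

/-- reachability with at least one step -/
lemma reach (hμ0 : ∀ n, 0 ≤ μ n) (hμ1 : HasSum μ 1) (hirr : IsIrredMat (P μ)) (k : ℤ) :
    ∃ n : ℕ, 0 < pstep (P μ) (n+1) 0 k := by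
  by_cases hk : k = 0
  · subst hk
    have hex : ∃ k₁, 0 < μ k₁ := by
      by_contra hc
      push_neg at hc
      have : ∀ n, μ n = 0 := fun n => le_antisymm (hc n) (hμ0 n)
      have h0 : HasSum μ 0 := by
        have : μ = fun _ => (0:ℝ) := funext this
        rw [this]; exact hasSum_zero
      have h1 : (1:ℝ) = 0 := hμ1.unique h0
      norm_num at h1
    obtain ⟨k₁, hk₁⟩ := hex
    obtain ⟨n₁, hn₁⟩ := hirr k₁ 0
    have hb : pstep (P μ) n₁ k₁ 0 = pstep (P μ) n₁ 0 (-k₁) := by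
      rw [pstep_base]; norm_num
    refine ⟨n₁, lt_of_lt_of_le ?_ (pstep_succ_ge hμ0 hμ1 n₁ 0 (-k₁) 0)⟩
    have h2 : (0:ℤ) - (-k₁) = k₁ := by ring
    rw [h2]
    exact mul_pos (hb ▸ hn₁) hk₁
  · obtain ⟨n, hn⟩ := hirr 0 k
    match n, hn with
    | 0, hn => exfalso; revert hn; simp only [pstep]; rw [if_neg (fun h : (0:ℤ) = k => hk h.symm)]; exact lt_irrefl (0:ℝ)
    | (m+1), hn => exact ⟨m, hn⟩

/-- positivity of superharmonic normalized functions -/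
lemma supH_pos (hμ0 : ∀ n, 0 ≤ μ n) (hμ1 : HasSum μ 1) (hirr : IsIrredMat (P μ))
    {g : ℤ → ℝ} (hg : SupH μ g) (hg0 : g 0 = 1) (m : ℤ) : 0 < g m := by
  obtain ⟨n, hn⟩ := reach hμ0 hμ1 hirr (-m)
  have hb : pstep (P μ) (n+1) m 0 = pstep (P μ) (n+1) 0 (-m) := by
    rw [pstep_base]; norm_num
  have := supH_harnack hμ0 hμ1 hg (n+1) m 0
  rw [hg0, hb, mul_one] at this
  exact lt_of_lt_of_le hn this

/-- crude Harnack upper bound, uniform over `HH` (and superharmonic functions) -/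
lemma supH_upper (hμ0 : ∀ n, 0 ≤ μ n) (hμ1 : HasSum μ 1) (hirr : IsIrredMat (P μ)) (m : ℤ) :
    ∃ C : ℝ, 0 < C ∧ ∀ g : ℤ → ℝ, SupH μ g → g 0 = 1 → g m ≤ C := by
  obtain ⟨n, hn⟩ := reach hμ0 hμ1 hirr m
  refine ⟨(pstep (P μ) (n+1) 0 m)⁻¹, inv_pos.mpr hn, fun g hg hg0 => ?_⟩
  have := supH_harnack hμ0 hμ1 hg (n+1) 0 m
  rw [hg0] at this
  calc g m = (pstep (P μ) (n+1) 0 m)⁻¹ * (pstep (P μ) (n+1) 0 m * g m) := by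
        field_simp
    _ ≤ (pstep (P μ) (n+1) 0 m)⁻¹ * 1 :=
        mul_le_mul_of_nonneg_left this (inv_nonneg.mpr (pstep_nonneg hμ0 _ 0 m))
    _ = (pstep (P μ) (n+1) 0 m)⁻¹ := mul_one _

/-! ### Translates, suprema, limits -/

noncomputable def T (g : ℤ → ℝ) (k : ℤ) : ℤ → ℝ := fun m => g (m + k) / g k

lemma T_mem_HH {μ : ℤ → ℝ} {f : ℤ → ℝ} (hf : f ∈ HH μ) (k : ℤ) : T f k ∈ HH μ := by
  obtain ⟨hh, hp, _⟩ := hf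
  refine ⟨fun x => ?_, fun m => div_pos (hp _) (hp _), by simp [T, (hp k).ne']⟩
  have h1 : HasSum (fun y => μ (y - (x + k)) * f y) (f (x + k)) := hh (x + k)
  have h2 : HasSum ((fun y => μ (y - (x + k)) * f y) ∘ (Equiv.addRight k))
      (f (x + k)) := ((Equiv.addRight k).hasSum_iff).mpr h1
  have h3 : HasSum (fun y => μ (y - x) * f (y + k)) (f (x + k)) := by
    refine h2.congr_fun fun y => ?_
    simp only [Function.comp_apply, Equiv.coe_addRight]
    congr 2
    ring
  have h4 := h3.div_const (f k)
  refine h4.congr_fun fun y => ?_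
  simp [T, mul_div_assoc]

lemma hasSum_HH_zero {μ : ℤ → ℝ} {f : ℤ → ℝ} (hf : f ∈ HH μ) :
    HasSum (fun y => μ y * f y) 1 := by
  have h := hf.1 0
  rw [hf.2.2] at h
  refine h.congr_fun fun y => by norm_num

lemma hasSum_HH_shift {μ : ℤ → ℝ} {f : ℤ → ℝ} (hf : f ∈ HH μ) (d : ℤ) :
    HasSum (fun y => μ y * f (y + d)) (f d) := by
  have h1 := hf.1 d
  have h2 := ((Equiv.addRight d).hasSum_iff).mpr h1
  refine h2.congr_fun fun y => ?_
  simp only [Function.comp_apply, Equiv.coe_addRight]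
  congr 2
  ring

/-- pointwise limits of elements of `HH` are superharmonic and normalized -/
lemma limit_supH {μ : ℤ → ℝ} (hμ0 : ∀ n, 0 ≤ μ n) {F : ℕ → ℤ → ℝ}
    (hF : ∀ j, F j ∈ HH μ) {g : ℤ → ℝ}
    (hlim : ∀ m, Tendsto (fun j => F j m) atTop (𝓝 (g m))) :
    SupH μ g ∧ g 0 = 1 := by
  have hg0 : ∀ m, 0 ≤ g m :=
    fun m => ge_of_tendsto (hlim m) (Eventually.of_forall fun j => ((hF j).2.1 m).le)
  have hgz : g 0 = 1 := by
    have h1 : Tendsto (fun j => F j 0) atTop (𝓝 1) := by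
      have : (fun j => F j 0) = fun _ => (1:ℝ) := funext fun j => (hF j).2.2
      rw [this]; exact tendsto_const_nhds
    exact tendsto_nhds_unique (hlim 0) h1
  refine ⟨⟨hg0, fun x => ?_⟩, hgz⟩
  have hnn : ∀ y, 0 ≤ μ (y - x) * g y := fun y => mul_nonneg (hμ0 _) (hg0 y)
  have hbound : ∀ u : Finset ℤ, ∑ y ∈ u, μ (y - x) * g y ≤ g x := by
    intro u
    have h1 : Tendsto (fun j => ∑ y ∈ u, μ (y - x) * F j y) atTop
        (𝓝 (∑ y ∈ u, μ (y - x) * g y)) :=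
      tendsto_finset_sum u fun y _ => (hlim y).const_mul _
    refine le_of_tendsto_of_tendsto' h1 (hlim x) fun j => ?_
    exact sum_le_hasSum u (fun y _ => mul_nonneg (hμ0 _) ((hF j).2.1 y).le) ((hF j).1 x)
  have hsum : Summable (fun y => μ (y - x) * g y) := summable_of_sum_le hnn hbound
  exact ⟨hsum, Summable.tsum_le_of_sum_le hsum hbound⟩

/-- subsequence extraction by compactness of a product of intervals -/
lemma exists_subseq_limit {μ : ℤ → ℝ} (hμ0 : ∀ n, 0 ≤ μ n) (hμ1 : HasSum μ 1)
    (hirr : IsIrredMat (P μ)) (F : ℕ → ℤ → ℝ) (hF : ∀ j, F j ∈ HH μ) :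
    ∃ (φ : ℕ → ℕ) (g : ℤ → ℝ), StrictMono φ ∧
      ∀ m, Tendsto (fun j => F (φ j) m) atTop (𝓝 (g m)) := by
  have hC : ∀ m : ℤ, ∃ C : ℝ, 0 < C ∧ ∀ g : ℤ → ℝ, SupH μ g → g 0 = 1 → g m ≤ C :=
    fun m => supH_upper hμ0 hμ1 hirr m
  choose C hCpos hCle using hC
  set s : Set (ℤ → ℝ) := Set.univ.pi (fun m => Set.Icc 0 (C m)) with hs
  have hcomp : IsCompact s := isCompact_univ_pi fun m => isCompact_Icc
  have hmem : ∀ j, F j ∈ s := by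
    intro j
    rw [hs, Set.mem_univ_pi]
    intro m
    exact ⟨((hF j).2.1 m).le, hCle m _ (mem_HH_supH (hF j)) (hF j).2.2⟩
  obtain ⟨g, -, φ, hφ, hconv⟩ := hcomp.tendsto_subseq hmem
  exact ⟨φ, g, hφ, fun m => (tendsto_pi_nhds.mp hconv) m⟩

noncomputable def MM (μ : ℤ → ℝ) (d : ℤ) : ℝ := sSup ((fun f => f d) '' HH μ)

lemma bddAbove_eval {μ : ℤ → ℝ} (hμ0 : ∀ n, 0 ≤ μ n) (hμ1 : HasSum μ 1)
    (hirr : IsIrredMat (P μ)) (d : ℤ) : BddAbove ((fun f => f d) '' HH μ) := by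
  obtain ⟨C, -, hC⟩ := supH_upper hμ0 hμ1 hirr d
  exact ⟨C, fun v ⟨f, hf, hv⟩ => hv ▸ hC f (mem_HH_supH hf) hf.2.2⟩

lemma le_MM {μ : ℤ → ℝ} (hμ0 : ∀ n, 0 ≤ μ n) (hμ1 : HasSum μ 1)
    (hirr : IsIrredMat (P μ)) {f : ℤ → ℝ} (hf : f ∈ HH μ) (d : ℤ) : f d ≤ MM μ d :=
  le_csSup (bddAbove_eval hμ0 hμ1 hirr d) ⟨f, hf, rfl⟩

lemma one_le_MM {μ : ℤ → ℝ} (hμ0 : ∀ n, 0 ≤ μ n) (hμ1 : HasSum μ 1)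
    (hirr : IsIrredMat (P μ)) (d : ℤ) : 1 ≤ MM μ d :=
  le_MM hμ0 hμ1 hirr (one_mem_HH hμ1) d

/-- ratio bound: for `f ∈ HH`, `f (y + d) ≤ MM d * f y` -/
lemma ratio_le {μ : ℤ → ℝ} (hμ0 : ∀ n, 0 ≤ μ n) (hμ1 : HasSum μ 1)
    (hirr : IsIrredMat (P μ)) {f : ℤ → ℝ} (hf : f ∈ HH μ) (d y : ℤ) :
    f (y + d) ≤ MM μ d * f y := by
  have h1 : (T f y) d ≤ MM μ d := le_MM hμ0 hμ1 hirr (T_mem_HH hf y) d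
  have h2 : f (d + y) / f y ≤ MM μ d := h1
  rw [div_le_iff₀ (hf.2.1 y)] at h2
  rw [add_comm]
  exact h2

/-- "maximizing limit" in direction d -/
def MaxLim (μ : ℤ → ℝ) (d : ℤ) (g : ℤ → ℝ) : Prop :=
  ∃ F : ℕ → ℤ → ℝ, (∀ j, F j ∈ HH μ) ∧
    (∀ m, Tendsto (fun j => F j m) atTop (𝓝 (g m))) ∧
    Tendsto (fun j => F j d) atTop (𝓝 (MM μ d))

lemma MaxLim.basic {μ : ℤ → ℝ} (hμ0 : ∀ n, 0 ≤ μ n) (hμ1 : HasSum μ 1)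
    (hirr : IsIrredMat (P μ)) {d : ℤ} {g : ℤ → ℝ} (h : MaxLim μ d g) :
    SupH μ g ∧ g 0 = 1 ∧ (∀ m, 0 < g m) ∧ g d = MM μ d := by
  obtain ⟨F, hF, hlim, hd⟩ := h
  obtain ⟨hsup, hz⟩ := limit_supH hμ0 hF hlim
  exact ⟨hsup, hz, fun m => supH_pos hμ0 hμ1 hirr hsup hz m,
    tendsto_nhds_unique (hlim d) hd⟩

lemma MaxLim.step {μ : ℤ → ℝ} (hμ0 : ∀ n, 0 ≤ μ n) (hμ1 : HasSum μ 1)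
    (hirr : IsIrredMat (P μ)) {d : ℤ} {g : ℤ → ℝ} (h : MaxLim μ d g)
    {k : ℤ} (hk : 0 < μ k) :
    g (k + d) = MM μ d * g k ∧ MaxLim μ d (T g k) := by
  obtain ⟨hsup, hz, hpos, hgd⟩ := h.basic hμ0 hμ1 hirr
  obtain ⟨F, hF, hlim, hd⟩ := h
  set s := MM μ d with hsdef
  -- key sum identity
  have key : ∀ j, HasSum (fun y => μ y * (s * F j y - F j (y + d))) (s - F j d) := by
    intro j
    have h1 := (hasSum_HH_zero (hF j)).mul_left s
    have h2 := hasSum_HH_shift (hF j) d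
    have h3 := h1.sub h2
    rw [mul_one] at h3
    refine h3.congr_fun fun y => ?_
    ring
  have hnn : ∀ j y, 0 ≤ μ y * (s * F j y - F j (y + d)) := by
    intro j y
    refine mul_nonneg (hμ0 y) ?_
    have := ratio_le hμ0 hμ1 hirr (hF j) d y
    linarith
  have hterm : ∀ j, μ k * (s * F j k - F j (k + d)) ≤ s - F j d := by
    intro j
    exact le_hasSum (key j) k (fun y _ => hnn j y)
  -- limits
  have hL : Tendsto (fun j => μ k * (s * F j k - F j (k + d))) atTop
      (𝓝 (μ k * (s * g k - g (k + d)))) :=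
    (((hlim k).const_mul s).sub (hlim (k + d))).const_mul (μ k)
  have hR : Tendsto (fun j => s - F j d) atTop (𝓝 0) := by
    have := (tendsto_const_nhds (x := s) (f := atTop (α := ℕ))).sub hd
    simpa using this
  have hle : μ k * (s * g k - g (k + d)) ≤ 0 :=
    le_of_tendsto_of_tendsto' hL hR hterm
  have hge : 0 ≤ μ k * (s * g k - g (k + d)) :=
    ge_of_tendsto hL (Eventually.of_forall fun j => hnn j k)
  have heq : g (k + d) = s * g k := by
    have h0 : μ k * (s * g k - g (k + d)) = 0 := le_antisymm hle hge
    have h1 : s * g k - g (k + d) = 0 := by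
      rcases mul_eq_zero.mp h0 with h | h
      · exact absurd h hk.ne'
      · exact h
    linarith
  refine ⟨heq, ⟨fun j => T (F j) k, fun j => T_mem_HH (hF j) k, fun m => ?_, ?_⟩⟩
  · have := (hlim (m + k)).div (hlim k) (hpos k).ne'
    exact this
  · show Tendsto (fun j => F j (d + k) / F j k) atTop (𝓝 (MM μ d))
    have h1 : Tendsto (fun j => F j (d + k) / F j k) atTop (𝓝 (g (d + k) / g k)) :=
      (hlim (d + k)).div (hlim k) (hpos k).ne'
    have h2 : g (d + k) / g k = MM μ d := by
      rw [add_comm d k, heq]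
      exact mul_div_cancel_right₀ _ (hpos k).ne'
    rw [← h2]
    exact h1

lemma T_T {g : ℤ → ℝ} (hg : ∀ m, 0 < g m) (z w : ℤ) : T (T g z) w = T g (w + z) := by
  funext m
  simp only [T]
  have e1 : m + w + z = m + (w + z) := by ring
  rw [e1]
  have hb : g (w + z) ≠ 0 := (hg (w + z)).ne'
  have hc : g z ≠ 0 := (hg z).ne'
  field_simp

lemma MaxLim.reachable {μ : ℤ → ℝ} (hμ0 : ∀ n, 0 ≤ μ n) (hμ1 : HasSum μ 1)
    (hirr : IsIrredMat (P μ)) {d : ℤ} :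
    ∀ (n : ℕ) (k : ℤ), 0 < pstep (P μ) n 0 k →
      ∀ g : ℤ → ℝ, MaxLim μ d g → g (k + d) = MM μ d * g k ∧ MaxLim μ d (T g k) := by
  intro n
  induction n with
  | zero =>
    intro k hk g hg
    have hk0 : k = 0 := by
      by_contra hc
      revert hk
      simp only [pstep]
      rw [if_neg (fun h : (0:ℤ) = k => hc h.symm)]
      exact lt_irrefl (0:ℝ)
    subst hk0
    obtain ⟨hsup, hz, hpos, hgd⟩ := hg.basic hμ0 hμ1 hirr
    constructor
    · rw [zero_add, hgd, hz, mul_one]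
    · have : T g 0 = g := by
        funext m; simp [T, hz]
      rw [this]; exact hg
  | succ n ih =>
    intro k hk g hg
    obtain ⟨z, hz1, hz2⟩ := pstep_succ_exists_pos hμ0 n 0 k hk
    obtain ⟨-, hTz⟩ := ih z hz1 g hg
    obtain ⟨hsup, hgz, hpos, -⟩ := hg.basic hμ0 hμ1 hirr
    obtain ⟨heq, hT2⟩ := hTz.step hμ0 hμ1 hirr hz2
    constructor
    · -- unfold the relation on T g z
      have h1 : g (k - z + d + z) / g z = MM μ d * (g (k - z + z) / g z) := heq
      have e1 : k - z + d + z = k + d := by ring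
      have e2 : k - z + z = k := by ring
      rw [e1, e2] at h1
      have hz' : g z ≠ 0 := (hpos z).ne'
      field_simp at h1
      linarith [h1]
    · have : T (T g z) (k - z) = T g k := by
        rw [T_T hpos, sub_add_cancel]
      rw [← this]
      exact hT2

lemma MaxLim.rel {μ : ℤ → ℝ} (hμ0 : ∀ n, 0 ≤ μ n) (hμ1 : HasSum μ 1)
    (hirr : IsIrredMat (P μ)) {d : ℤ} {g : ℤ → ℝ} (hg : MaxLim μ d g) (k : ℤ) :
    g (k + d) = MM μ d * g k := by
  obtain ⟨n, hn⟩ := reach hμ0 hμ1 hirr k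
  exact (MaxLim.reachable hμ0 hμ1 hirr (n+1) k hn g hg).1

/-- existence of a maximizing limit -/
lemma MaxLim.exists {μ : ℤ → ℝ} (hμ0 : ∀ n, 0 ≤ μ n) (hμ1 : HasSum μ 1)
    (hirr : IsIrredMat (P μ)) (d : ℤ) : ∃ g : ℤ → ℝ, MaxLim μ d g := by
  have hne : ((fun f => f d) '' HH μ).Nonempty := ⟨1, (fun _ => (1:ℝ)), one_mem_HH hμ1, rfl⟩
  have hsel : ∀ j : ℕ, ∃ f : ℤ → ℝ, f ∈ HH μ ∧ MM μ d - 1/(j+1) < f d := by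
    intro j
    have hlt : MM μ d - 1/(j+1) < MM μ d := by
      have : (0:ℝ) < 1/(j+1) := by positivity
      linarith
    obtain ⟨v, ⟨f, hf, hv⟩, hgt⟩ := exists_lt_of_lt_csSup hne hlt
    subst hv
    exact ⟨f, hf, by simpa using hgt⟩
  choose F0 hmem hgt using hsel
  obtain ⟨φ, g, hφ, hconv⟩ := exists_subseq_limit hμ0 hμ1 hirr F0 hmem
  refine ⟨g, fun j => F0 (φ j), fun j => hmem (φ j), hconv, ?_⟩
  -- squeeze to show convergence of values at d
  have hup : ∀ j, F0 (φ j) d ≤ MM μ d := fun j => le_MM hμ0 hμ1 hirr (hmem (φ j)) d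
  have hlo : ∀ j : ℕ, MM μ d - 1/(j+1) ≤ F0 (φ j) d := by
    intro j
    have h1 := hgt (φ j)
    have h2 : (1:ℝ)/(φ j + 1) ≤ 1/(j+1) := by
      apply one_div_le_one_div_of_le
      · positivity
      · have h3 : j ≤ φ j := hφ.le_apply
        have h4 : (j:ℝ) ≤ (φ j : ℝ) := by exact_mod_cast h3
        linarith
    linarith
  have htend : Tendsto (fun j : ℕ => MM μ d - 1/(j+1)) atTop (𝓝 (MM μ d)) := by
    have h1 : Tendsto (fun j : ℕ => (1:ℝ)/(j+1)) atTop (𝓝 0) :=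
      tendsto_one_div_add_atTop_nhds_zero_nat
    have := (tendsto_const_nhds (x := MM μ d) (f := atTop (α := ℕ))).sub h1
    simpa using this
  exact tendsto_of_tendsto_of_tendsto_of_le_of_le htend tendsto_const_nhds hlo hup

/-! ### Geometric solutions and strict convexity of the moment generating function -/

lemma geom_of_rel {g : ℤ → ℝ} {s : ℝ} (hs : 0 < s) (h0 : g 0 = 1)
    (hrel : ∀ k : ℤ, g (k + 1) = s * g k) : ∀ m : ℤ, g m = s ^ m := by
  intro m
  induction m using Int.induction_on with
  | zero => simpa using h0
  | succ n ih =>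
    rw [hrel n, ih, zpow_add_one₀ hs.ne']
    ring
  | pred n ih =>
    have h1 := hrel (-(n:ℤ) - 1)
    have e1 : -(n:ℤ) - 1 + 1 = -(n:ℤ) := by ring
    rw [e1, ih] at h1
    have h2 : g (-(n:ℤ) - 1) = s ^ (-(n:ℤ)) / s := by
      field_simp at h1 ⊢
      linarith [h1]
    rw [h2, zpow_sub_one₀ hs.ne', div_eq_mul_inv]

lemma exp_mul_int (c : ℝ) (m : ℤ) : Real.exp (c * m) = Real.exp c ^ m := by
  induction m using Int.induction_on with
  | zero => simp
  | succ n ih =>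
    have e : (((n:ℤ) + 1 : ℤ) : ℝ) = (((n:ℤ) : ℤ) : ℝ) + 1 := by push_cast; ring
    rw [e, mul_add, mul_one, Real.exp_add, ih, zpow_add_one₀ (Real.exp_ne_zero c)]
  | pred n ih =>
    have e : ((-(n:ℤ) - 1 : ℤ) : ℝ) = ((-(n:ℤ) : ℤ) : ℝ) - 1 := by push_cast; ring
    rw [e, mul_sub, mul_one, Real.exp_sub, ih, zpow_sub_one₀ (Real.exp_ne_zero c),
      div_eq_mul_inv]

lemma zpow_eq_exp {s : ℝ} (hs : 0 < s) (m : ℤ) : s ^ m = Real.exp (Real.log s * m) := by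
  rw [exp_mul_int, Real.exp_log hs]

lemma subinv_of_supH_exp {μ : ℤ → ℝ} {c : ℝ} (hg : SupH μ (fun m : ℤ => Real.exp (c * m))) :
    Summable (fun n : ℤ => μ n * Real.exp (c * n)) ∧
      (∑' n : ℤ, μ n * Real.exp (c * n)) ≤ 1 := by
  have h1 := (hg.2 0).1
  have h2 := (hg.2 0).2
  simp only [sub_zero] at h1 h2
  refine ⟨h1, ?_⟩
  simpa using h2

/-- The supremum ratio is geometric: there is a maximizing limit which is exponential. -/
lemma MM_exp_subinv (hμ0 : ∀ n, 0 ≤ μ n) (hμ1 : HasSum μ 1) (hirr : IsIrredMat (P μ)) :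
    (Summable (fun n : ℤ => μ n * Real.exp (Real.log (MM μ 1) * n)) ∧
      (∑' n : ℤ, μ n * Real.exp (Real.log (MM μ 1) * n)) ≤ 1) ∧
    (Summable (fun n : ℤ => μ n * Real.exp (-Real.log (MM μ (-1)) * n)) ∧
      (∑' n : ℤ, μ n * Real.exp (-Real.log (MM μ (-1)) * n)) ≤ 1) := by
  constructor
  · obtain ⟨g, hg⟩ := MaxLim.exists hμ0 hμ1 hirr 1
    obtain ⟨hsup, hz, hpos, -⟩ := hg.basic hμ0 hμ1 hirr
    have hs : (0:ℝ) < MM μ 1 := lt_of_lt_of_le one_pos (one_le_MM hμ0 hμ1 hirr 1)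
    have hgeom : ∀ m : ℤ, g m = Real.exp (Real.log (MM μ 1) * m) := by
      intro m
      rw [geom_of_rel hs hz (fun k => hg.rel hμ0 hμ1 hirr k) m]
      exact zpow_eq_exp hs m
    have : g = fun m : ℤ => Real.exp (Real.log (MM μ 1) * m) := funext hgeom
    rw [this] at hsup
    exact subinv_of_supH_exp hsup
  · obtain ⟨g, hg⟩ := MaxLim.exists hμ0 hμ1 hirr (-1)
    obtain ⟨hsup, hz, hpos, -⟩ := hg.basic hμ0 hμ1 hirr
    have hs : (0:ℝ) < MM μ (-1) := lt_of_lt_of_le one_pos (one_le_MM hμ0 hμ1 hirr (-1))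
    have hrel : ∀ k : ℤ, g (k + 1) = (MM μ (-1))⁻¹ * g k := by
      intro k
      have h1 := hg.rel hμ0 hμ1 hirr (k + 1)
      have e1 : k + 1 + -1 = k := by ring
      rw [e1] at h1
      field_simp [h1]
      rw [h1]; ring
    have hgeom : ∀ m : ℤ, g m = Real.exp (-Real.log (MM μ (-1)) * m) := by
      intro m
      rw [geom_of_rel (inv_pos.mpr hs) hz hrel m, zpow_eq_exp (inv_pos.mpr hs) m,
        Real.log_inv]
    have : g = fun m : ℤ => Real.exp (-Real.log (MM μ (-1)) * m) := funext hgeom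
    rw [this] at hsup
    exact subinv_of_supH_exp hsup

lemma exists_pos_support (hμ0 : ∀ n, 0 ≤ μ n) (hμ1 : HasSum μ 1) (hirr : IsIrredMat (P μ)) :
    ∃ n₀ : ℤ, n₀ ≠ 0 ∧ 0 < μ n₀ := by
  by_contra hc
  push_neg at hc
  have hzero : ∀ n₀ : ℤ, n₀ ≠ 0 → μ n₀ = 0 := fun n₀ h => le_antisymm (hc n₀ h) (hμ0 n₀)
  have claim : ∀ (n : ℕ) (k : ℤ), k ≠ 0 → ¬(0 < pstep (P μ) n 0 k) := by
    intro n
    induction n with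
    | zero =>
      intro k hk
      simp only [pstep]
      rw [if_neg (fun h : (0:ℤ) = k => hk h.symm)]
      exact lt_irrefl (0:ℝ)
    | succ n ih =>
      intro k hk hpos
      obtain ⟨z, hz1, hz2⟩ := pstep_succ_exists_pos hμ0 n 0 k hpos
      have hkz : k - z = 0 := by
        by_contra h
        rw [hzero _ h] at hz2
        exact lt_irrefl 0 hz2
      have : z = k := by linarith [hkz]
      subst this
      exact ih z hk hz1
  obtain ⟨n, hn⟩ := reach hμ0 hμ1 hirr 1
  exact claim (n+1) 1 one_ne_zero hn

lemma summable_ite_erase {f : ℤ → ℝ} (hf : Summable f) (n₀ : ℤ) :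
    Summable (fun n => if n = n₀ then (0:ℝ) else f n) := by
  have h1 : Summable (fun n : ℤ => if n = n₀ then f n₀ else (0:ℝ)) :=
    (hasSum_ite_eq n₀ (f n₀)).summable
  refine (hf.sub h1).congr fun n => ?_
  by_cases h : n = n₀ <;> simp [h]

/-- strict convexity of the mgf -/
lemma strict_convex_phi (hμ0 : ∀ n, 0 ≤ μ n) (hμ1 : HasSum μ 1) (hirr : IsIrredMat (P μ))
    {a b θ : ℝ} (hab : a ≠ b) (hθ0 : 0 < θ) (hθ1 : θ < 1)
    (ha : Summable (fun n : ℤ => μ n * Real.exp (a * n)))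
    (hb : Summable (fun n : ℤ => μ n * Real.exp (b * n))) :
    Summable (fun n : ℤ => μ n * Real.exp ((θ*a + (1-θ)*b) * n)) ∧
    (∑' n : ℤ, μ n * Real.exp ((θ*a + (1-θ)*b) * n))
      < θ * (∑' n : ℤ, μ n * Real.exp (a * n)) + (1-θ) * (∑' n : ℤ, μ n * Real.exp (b * n)) := by
  obtain ⟨n₀, hn₀ne, hn₀pos⟩ := exists_pos_support hμ0 hμ1 hirr
  have hconv : ∀ n : ℤ, Real.exp ((θ*a + (1-θ)*b) * n)
      ≤ θ * Real.exp (a * n) + (1-θ) * Real.exp (b * n) := by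
    intro n
    have h := convexOn_exp.2 (Set.mem_univ (a * n)) (Set.mem_univ (b * n))
      hθ0.le (by linarith : (0:ℝ) ≤ 1 - θ) (by ring)
    have e : (θ*a + (1-θ)*b) * n = θ * (a * n) + (1-θ) * (b * n) := by ring
    rw [e]
    simpa [smul_eq_mul] using h
  have hconvmu : ∀ n : ℤ, μ n * Real.exp ((θ*a + (1-θ)*b) * n)
      ≤ θ * (μ n * Real.exp (a * n)) + (1-θ) * (μ n * Real.exp (b * n)) := by
    intro n
    have := mul_le_mul_of_nonneg_left (hconv n) (hμ0 n)
    nlinarith [this]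
  have hsumc : Summable (fun n : ℤ => θ * (μ n * Real.exp (a * n))
      + (1-θ) * (μ n * Real.exp (b * n))) := (ha.mul_left θ).add (hb.mul_left (1-θ))
  have hmid : Summable (fun n : ℤ => μ n * Real.exp ((θ*a + (1-θ)*b) * n)) := by
    apply Summable.of_nonneg_of_le
      (fun n => mul_nonneg (hμ0 n) (Real.exp_pos _).le) hconvmu hsumc
  refine ⟨hmid, ?_⟩
  -- strict inequality at n₀
  have hstrict : μ n₀ * Real.exp ((θ*a + (1-θ)*b) * n₀)
      < θ * (μ n₀ * Real.exp (a * n₀)) + (1-θ) * (μ n₀ * Real.exp (b * n₀)) := by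
    have hne : a * n₀ ≠ b * n₀ := by
      intro h
      exact hab (mul_right_cancel₀ (Int.cast_ne_zero.mpr hn₀ne) h)
    have h := strictConvexOn_exp.2 (Set.mem_univ (a * n₀)) (Set.mem_univ (b * n₀))
      hne hθ0 (by linarith : (0:ℝ) < 1 - θ) (by ring)
    have h2 : Real.exp ((θ*a + (1-θ)*b) * n₀)
        < θ * Real.exp (a * n₀) + (1-θ) * Real.exp (b * n₀) := by
      have e : (θ*a + (1-θ)*b) * n₀ = θ * (a * n₀) + (1-θ) * (b * n₀) := by ring
      rw [e]
      simpa [smul_eq_mul] using h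
    nlinarith [mul_lt_mul_of_pos_left h2 hn₀pos]
  -- split the sums at n₀
  rw [Summable.tsum_eq_add_tsum_ite hmid n₀, Summable.tsum_eq_add_tsum_ite ha n₀, Summable.tsum_eq_add_tsum_ite hb n₀]
  have htail : (∑' n : ℤ, if n = n₀ then (0:ℝ) else μ n * Real.exp ((θ*a + (1-θ)*b) * n))
      ≤ θ * (∑' n : ℤ, if n = n₀ then (0:ℝ) else μ n * Real.exp (a * n))
        + (1-θ) * (∑' n : ℤ, if n = n₀ then (0:ℝ) else μ n * Real.exp (b * n)) := by
    have h1 : (∑' n : ℤ, if n = n₀ then (0:ℝ) else μ n * Real.exp ((θ*a + (1-θ)*b) * n))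
        ≤ ∑' n : ℤ, (θ * (if n = n₀ then (0:ℝ) else μ n * Real.exp (a * n))
          + (1-θ) * (if n = n₀ then (0:ℝ) else μ n * Real.exp (b * n))) := by
      apply Summable.tsum_le_tsum _ (summable_ite_erase hmid n₀)
        (((summable_ite_erase ha n₀).mul_left θ).add ((summable_ite_erase hb n₀).mul_left (1-θ)))
      intro n
      by_cases h : n = n₀
      · simp [h]
      · simp only [if_neg h]
        exact hconvmu n
    rw [Summable.tsum_add ((summable_ite_erase ha n₀).mul_left θ)
      ((summable_ite_erase hb n₀).mul_left (1-θ)),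
      tsum_mul_left, tsum_mul_left] at h1
    exact h1
  linarith [hstrict, htail]

/-! ### Consequences of strict convexity; domination; part 2 -/

lemma mid_combo {x y z : ℝ} (h1 : x < y) (h2 : y < z) :
    ∃ θ : ℝ, 0 < θ ∧ θ < 1 ∧ y = θ*x + (1-θ)*z := by
  refine ⟨(z - y)/(z - x), div_pos (by linarith) (by linarith), ?_, ?_⟩
  · rw [div_lt_one (by linarith : (0:ℝ) < z - x)]
    linarith
  · have h3 : z - x ≠ 0 := by linarith
    field_simp
    ring

lemma hasSum_phi_zero {μ : ℤ → ℝ} (hμ1 : HasSum μ 1) :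
    HasSum (fun n : ℤ => μ n * Real.exp (0 * n)) 1 := by
  refine hμ1.congr_fun fun n => ?_
  simp

/-- In the presence of two roots 0 ≠ c₀ of φ = 1, any c with φ(c) ≤ 1 lies between them. -/
lemma interval_of_subinv {μ : ℤ → ℝ} (hμ0 : ∀ n, 0 ≤ μ n) (hμ1 : HasSum μ 1)
    (hirr : IsIrredMat (P μ))
    {c₀ : ℝ} (hc₀ne : c₀ ≠ 0) (hc₀ : HasSum (fun n : ℤ => μ n * Real.exp (c₀ * n)) 1)
    {c : ℝ} (hcs : Summable (fun n : ℤ => μ n * Real.exp (c * n)))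
    (hcle : (∑' n : ℤ, μ n * Real.exp (c * n)) ≤ 1) :
    min 0 c₀ ≤ c ∧ c ≤ max 0 c₀ := by
  have h0 := hasSum_phi_zero hμ1
  have hmnMx : min 0 c₀ < max 0 c₀ := by
    rcases lt_or_gt_of_ne hc₀ne with h | h
    · rw [min_eq_right h.le, max_eq_left h.le]; exact h
    · rw [min_eq_left h.le, max_eq_right h.le]; exact h
  have hmn : HasSum (fun n : ℤ => μ n * Real.exp (min 0 c₀ * n)) 1 := by
    rcases le_total 0 c₀ with h | h
    · rw [min_eq_left h]; exact h0
    · rw [min_eq_right h]; exact hc₀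
  have hMx : HasSum (fun n : ℤ => μ n * Real.exp (max 0 c₀ * n)) 1 := by
    rcases le_total 0 c₀ with h | h
    · rw [max_eq_right h]; exact hc₀
    · rw [max_eq_left h]; exact h0
  constructor
  · by_contra hlt
    push_neg at hlt
    obtain ⟨θ, hθ0, hθ1, hcomb⟩ := mid_combo hlt hmnMx
    have hne : c ≠ max 0 c₀ := fun h => by rw [h] at hlt; linarith
    obtain ⟨-, hstrict⟩ := strict_convex_phi hμ0 hμ1 hirr hne hθ0 hθ1 hcs hMx.summable
    rw [← hcomb, hmn.tsum_eq, hMx.tsum_eq] at hstrict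
    nlinarith
  · by_contra hlt
    push_neg at hlt
    obtain ⟨θ, hθ0, hθ1, hcomb⟩ := mid_combo hmnMx hlt
    have hne : min 0 c₀ ≠ c := fun h => by rw [← h] at hlt; linarith
    obtain ⟨-, hstrict⟩ := strict_convex_phi hμ0 hμ1 hirr hne hθ0 hθ1 hmn.summable hcs
    rw [← hcomb, hMx.tsum_eq, hmn.tsum_eq] at hstrict
    nlinarith

/-- two-roots-only: any exact root is 0 or c₀. -/
lemma root_cases {μ : ℤ → ℝ} (hμ0 : ∀ n, 0 ≤ μ n) (hμ1 : HasSum μ 1)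
    (hirr : IsIrredMat (P μ))
    {c₀ : ℝ} (hc₀ne : c₀ ≠ 0) (hc₀ : HasSum (fun n : ℤ => μ n * Real.exp (c₀ * n)) 1)
    {c : ℝ} (hc : HasSum (fun n : ℤ => μ n * Real.exp (c * n)) 1) :
    c = 0 ∨ c = c₀ := by
  obtain ⟨h1, h2⟩ := interval_of_subinv hμ0 hμ1 hirr hc₀ne hc₀ hc.summable hc.tsum_eq.le
  have hmn : HasSum (fun n : ℤ => μ n * Real.exp (min 0 c₀ * n)) 1 := by
    rcases le_total 0 c₀ with h | h
    · rw [min_eq_left h]; exact hasSum_phi_zero hμ1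
    · rw [min_eq_right h]; exact hc₀
  have hMx : HasSum (fun n : ℤ => μ n * Real.exp (max 0 c₀ * n)) 1 := by
    rcases le_total 0 c₀ with h | h
    · rw [max_eq_right h]; exact hc₀
    · rw [max_eq_left h]; exact hasSum_phi_zero hμ1
  have hcases : c = min 0 c₀ ∨ c = max 0 c₀ := by
    by_contra hcon
    push_neg at hcon
    have hlt1 : min 0 c₀ < c := lt_of_le_of_ne h1 (Ne.symm hcon.1)
    have hlt2 : c < max 0 c₀ := lt_of_le_of_ne h2 hcon.2
    obtain ⟨θ, hθ0, hθ1, hcomb⟩ := mid_combo hlt1 hlt2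
    have hne : min 0 c₀ ≠ max 0 c₀ := by
      rcases lt_or_gt_of_ne hc₀ne with h | h
      · rw [min_eq_right h.le, max_eq_left h.le]; exact h.ne
      · rw [min_eq_left h.le, max_eq_right h.le]; exact (Ne.symm h.ne')
    obtain ⟨-, hstrict⟩ := strict_convex_phi hμ0 hμ1 hirr hne hθ0 hθ1
      hmn.summable hMx.summable
    rw [← hcomb, hc.tsum_eq, hmn.tsum_eq, hMx.tsum_eq] at hstrict
    nlinarith
  rcases le_total 0 c₀ with h | h
  · rw [min_eq_left h, max_eq_right h] at hcases; exact hcases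
  · rw [min_eq_right h, max_eq_left h] at hcases; exact hcases.symm

/-- part-2 shaped consequence -/
lemma part2_one_zero {μ : ℤ → ℝ} (hμ0 : ∀ n, 0 ≤ μ n) (hμ1 : HasSum μ 1)
    (hirr : IsIrredMat (P μ))
    {cp cm : ℝ} (hcp0 : 0 ≤ cp) (hcm0 : cm ≤ 0)
    (hcp : Summable (fun n : ℤ => μ n * Real.exp (cp * n)))
    (hcple : (∑' n : ℤ, μ n * Real.exp (cp * n)) ≤ 1)
    (hcm : Summable (fun n : ℤ => μ n * Real.exp (cm * n)))
    (hcmle : (∑' n : ℤ, μ n * Real.exp (cm * n)) ≤ 1) :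
    cp = 0 ∨ cm = 0 := by
  by_contra hcon
  push_neg at hcon
  have h1 : cm < 0 := lt_of_le_of_ne hcm0 hcon.2
  have h2 : 0 < cp := lt_of_le_of_ne hcp0 (Ne.symm hcon.1)
  obtain ⟨θ, hθ0, hθ1, hcomb⟩ := mid_combo h1 h2
  have hne : cm ≠ cp := by linarith
  obtain ⟨-, hstrict⟩ := strict_convex_phi hμ0 hμ1 hirr hne hθ0 hθ1 hcm hcp
  rw [← hcomb, (hasSum_phi_zero hμ1).tsum_eq] at hstrict
  nlinarith

/-! ### Maximizing sequences with exponential limits; domination; exact roots -/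

lemma maxlim_exp_plus {μ : ℤ → ℝ} (hμ0 : ∀ n, 0 ≤ μ n) (hμ1 : HasSum μ 1)
    (hirr : IsIrredMat (P μ)) :
    ∃ F : ℕ → ℤ → ℝ, (∀ j, F j ∈ HH μ) ∧
      ∀ m : ℤ, Tendsto (fun j => F j m) atTop (𝓝 (Real.exp (Real.log (MM μ 1) * m))) := by
  obtain ⟨g, hg⟩ := MaxLim.exists hμ0 hμ1 hirr 1
  obtain ⟨-, hz, -, -⟩ := hg.basic hμ0 hμ1 hirr
  have hs : (0:ℝ) < MM μ 1 := lt_of_lt_of_le one_pos (one_le_MM hμ0 hμ1 hirr 1)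
  have hgeom : ∀ m : ℤ, g m = Real.exp (Real.log (MM μ 1) * m) := by
    intro m
    rw [geom_of_rel hs hz (fun k => hg.rel hμ0 hμ1 hirr k) m]
    exact zpow_eq_exp hs m
  obtain ⟨F, hF, hlim, -⟩ := hg
  exact ⟨F, hF, fun m => hgeom m ▸ hlim m⟩

lemma maxlim_exp_minus {μ : ℤ → ℝ} (hμ0 : ∀ n, 0 ≤ μ n) (hμ1 : HasSum μ 1)
    (hirr : IsIrredMat (P μ)) :
    ∃ F : ℕ → ℤ → ℝ, (∀ j, F j ∈ HH μ) ∧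
      ∀ m : ℤ, Tendsto (fun j => F j m) atTop (𝓝 (Real.exp (-Real.log (MM μ (-1)) * m))) := by
  obtain ⟨g, hg⟩ := MaxLim.exists hμ0 hμ1 hirr (-1)
  obtain ⟨-, hz, -, -⟩ := hg.basic hμ0 hμ1 hirr
  have hs : (0:ℝ) < MM μ (-1) := lt_of_lt_of_le one_pos (one_le_MM hμ0 hμ1 hirr (-1))
  have hrel : ∀ k : ℤ, g (k + 1) = (MM μ (-1))⁻¹ * g k := by
    intro k
    have h1 := hg.rel hμ0 hμ1 hirr (k + 1)
    have e1 : k + 1 + -1 = k := by ring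
    rw [e1] at h1
    field_simp [h1]
    rw [h1]; ring
  have hgeom : ∀ m : ℤ, g m = Real.exp (-Real.log (MM μ (-1)) * m) := by
    intro m
    rw [geom_of_rel (inv_pos.mpr hs) hz hrel m, zpow_eq_exp (inv_pos.mpr hs) m, Real.log_inv]
  obtain ⟨F, hF, hlim, -⟩ := hg
  exact ⟨F, hF, fun m => hgeom m ▸ hlim m⟩

lemma iter_ratio {μ : ℤ → ℝ} (hμ0 : ∀ n, 0 ≤ μ n) (hμ1 : HasSum μ 1)
    (hirr : IsIrredMat (P μ)) {f : ℤ → ℝ} (hf : f ∈ HH μ) (d : ℤ) :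
    ∀ (n : ℕ) (k : ℤ), f (k + n * d) ≤ f k * (MM μ d)^n := by
  intro n
  induction n with
  | zero => intro k; simp
  | succ n ih =>
    intro k
    have e1 : k + ((n:ℤ)+1) * d = (k + n * d) + d := by ring
    have hMM : (0:ℝ) ≤ MM μ d := le_trans zero_le_one (one_le_MM hμ0 hμ1 hirr d)
    calc f (k + ((n:ℕ)+1 : ℕ) * d) = f ((k + n * d) + d) := by
          rw [← e1]; norm_num
      _ ≤ MM μ d * f (k + n * d) := by
          have := ratio_le hμ0 hμ1 hirr hf d (k + n * d)
          linarith
      _ ≤ MM μ d * (f k * (MM μ d)^n) := mul_le_mul_of_nonneg_left (ih k) hMM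
      _ = f k * (MM μ d)^(n+1) := by ring

/-- The universal exponential domination of elements of `HH`. -/
lemma HH_le_dom {μ : ℤ → ℝ} (hμ0 : ∀ n, 0 ≤ μ n) (hμ1 : HasSum μ 1)
    (hirr : IsIrredMat (P μ)) {f : ℤ → ℝ} (hf : f ∈ HH μ) (m : ℤ) :
    f m ≤ Real.exp (Real.log (MM μ 1) * m) + Real.exp (-Real.log (MM μ (-1)) * m) := by
  have hs1 : (0:ℝ) < MM μ 1 := lt_of_lt_of_le one_pos (one_le_MM hμ0 hμ1 hirr 1)
  have hs2 : (0:ℝ) < MM μ (-1) := lt_of_lt_of_le one_pos (one_le_MM hμ0 hμ1 hirr (-1))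
  rcases le_or_gt 0 m with hm | hm
  · have h1 := iter_ratio hμ0 hμ1 hirr hf 1 m.toNat 0
    rw [hf.2.2, one_mul, mul_one, zero_add] at h1
    have e1 : ((m.toNat : ℤ)) = m := Int.toNat_of_nonneg hm
    rw [e1] at h1
    have h2 : (MM μ 1)^(m.toNat) = Real.exp (Real.log (MM μ 1) * m) := by
      rw [← zpow_natCast, zpow_eq_exp hs1, e1]
    rw [h2] at h1
    have := Real.exp_pos (-Real.log (MM μ (-1)) * m)
    linarith
  · have h1 := iter_ratio hμ0 hμ1 hirr hf (-1) (-m).toNat 0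
    rw [hf.2.2, one_mul, zero_add] at h1
    have e1 : ((((-m).toNat) : ℤ)) = -m := Int.toNat_of_nonneg (by linarith)
    have e2 : ((-m).toNat : ℤ) * (-1) = m := by rw [e1]; ring
    rw [e2] at h1
    have h2 : (MM μ (-1))^((-m).toNat) = Real.exp (-Real.log (MM μ (-1)) * m) := by
      rw [← zpow_natCast, zpow_eq_exp hs2, e1]
      push_cast
      ring_nf
    rw [h2] at h1
    have := Real.exp_pos (Real.log (MM μ 1) * m)
    linarith

/-- The key exact-root identities: `φ(log M(1)) = 1` and `φ(-log M(-1)) = 1`. -/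
lemma phi_MM_eq_one {μ : ℤ → ℝ} (hμ0 : ∀ n, 0 ≤ μ n) (hμ1 : HasSum μ 1)
    (hirr : IsIrredMat (P μ)) :
    HasSum (fun n : ℤ => μ n * Real.exp (Real.log (MM μ 1) * n)) 1 ∧
    HasSum (fun n : ℤ => μ n * Real.exp (-Real.log (MM μ (-1)) * n)) 1 := by
  obtain ⟨⟨Sp, -⟩, ⟨Sm, -⟩⟩ := MM_exp_subinv hμ0 hμ1 hirr
  set cp := Real.log (MM μ 1) with hcp
  set cm := -Real.log (MM μ (-1)) with hcm
  have hbound_sum : Summable (fun y : ℤ => μ y * (Real.exp (cp * y) + Real.exp (cm * y))) := by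
    refine (Sp.add Sm).congr fun y => ?_
    ring
  have key : ∀ (F : ℕ → ℤ → ℝ), (∀ j, F j ∈ HH μ) → ∀ (c : ℝ),
      (∀ m : ℤ, Tendsto (fun j => F j m) atTop (𝓝 (Real.exp (c * m)))) →
      (∑' y : ℤ, μ y * Real.exp (c * y)) = 1 := by
    intro F hF c hlim
    have hDC : Tendsto (fun j => ∑' y : ℤ, μ y * F j y) atTop
        (𝓝 (∑' y : ℤ, μ y * Real.exp (c * y))) := by
      apply tendsto_tsum_of_dominated_convergence hbound_sum
        (fun y => (hlim y).const_mul (μ y))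
      refine Eventually.of_forall fun j y => ?_
      rw [Real.norm_eq_abs, abs_of_nonneg (mul_nonneg (hμ0 y) ((hF j).2.1 y).le)]
      exact mul_le_mul_of_nonneg_left (HH_le_dom hμ0 hμ1 hirr (hF j) y) (hμ0 y)
    have hconst : (fun j : ℕ => ∑' y : ℤ, μ y * F j y) = fun _ => (1:ℝ) :=
      funext fun j => (hasSum_HH_zero (hF j)).tsum_eq
    rw [hconst] at hDC
    exact tendsto_nhds_unique hDC tendsto_const_nhds
  constructor
  · obtain ⟨F, hF, hlim⟩ := maxlim_exp_plus hμ0 hμ1 hirr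
    have := key F hF cp hlim
    exact (Summable.hasSum_iff Sp).mpr this
  · obtain ⟨F, hF, hlim⟩ := maxlim_exp_minus hμ0 hμ1 hirr
    have := key F hF cm hlim
    exact (Summable.hasSum_iff Sm).mpr this

/-- Part 2: under the only-root-zero hypothesis, all of `HH` is constant `1`. -/
lemma part2_const {μ : ℤ → ℝ} (hμ0 : ∀ n, 0 ≤ μ n) (hμ1 : HasSum μ 1)
    (hirr : IsIrredMat (P μ))
    (hroots : ∀ c : ℝ, HasSum (fun n : ℤ => μ n * Real.exp (c * n)) 1 → c = 0)
    {f : ℤ → ℝ} (hf : f ∈ HH μ) : ∀ m, f m = 1 := by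
  obtain ⟨hp, hm⟩ := phi_MM_eq_one hμ0 hμ1 hirr
  have hs1 : (0:ℝ) < MM μ 1 := lt_of_lt_of_le one_pos (one_le_MM hμ0 hμ1 hirr 1)
  have hs2 : (0:ℝ) < MM μ (-1) := lt_of_lt_of_le one_pos (one_le_MM hμ0 hμ1 hirr (-1))
  have hcp : Real.log (MM μ 1) = 0 := hroots _ hp
  have hcm : -Real.log (MM μ (-1)) = 0 := hroots _ hm
  have hM1 : MM μ 1 = 1 := by
    rw [← Real.exp_log hs1, hcp, Real.exp_zero]
  have hM2 : MM μ (-1) = 1 := by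
    rw [← Real.exp_log hs2, show Real.log (MM μ (-1)) = 0 by linarith [hcm], Real.exp_zero]
  have hrel : ∀ k : ℤ, f (k + 1) = 1 * f k := by
    intro k
    have h1 := ratio_le hμ0 hμ1 hirr hf 1 k
    rw [hM1] at h1
    have h2 := ratio_le hμ0 hμ1 hirr hf (-1) (k+1)
    rw [hM2, show k + 1 + -1 = k by ring] at h2
    linarith
  intro m
  have := geom_of_rel one_pos hf.2.2 hrel m
  simpa using this

/-! ### Part 1: closedness, convexity, compactness of HH; extreme points; Krein-Milman -/

lemma hasSum_exp_row {μ : ℤ → ℝ} {c S : ℝ}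
    (h : HasSum (fun n : ℤ => μ n * Real.exp (c * n)) S) (x : ℤ) :
    HasSum (fun y : ℤ => μ (y - x) * Real.exp (c * y)) (Real.exp (c * x) * S) := by
  have h2 := h.mul_left (Real.exp (c * x))
  have h3 : HasSum ((fun y : ℤ => μ (y - x) * Real.exp (c * y)) ∘ (Equiv.addRight x))
      (Real.exp (c * x) * S) := by
    refine h2.congr_fun fun k => ?_
    simp only [Function.comp_apply, Equiv.coe_addRight, add_sub_cancel_right]
    have e1 : c * ((k + x : ℤ) : ℝ) = c * (k:ℝ) + c * (x:ℝ) := by push_cast; ring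
    rw [e1, Real.exp_add]
    ring
  exact ((Equiv.addRight x).hasSum_iff).mp h3

lemma single_of_hasSum {h : ℤ → ℝ} {S : ℝ} (hs : HasSum h S) (hnn : ∀ y, 0 ≤ h y)
    (k : ℤ) (hk : h k = S) : ∀ y, y ≠ k → h y = 0 := by
  have hsub := hs.sub (hasSum_ite_eq k (h k))
  rw [hk, sub_self] at hsub
  have hsub2 : HasSum (fun y => if y = k then (0:ℝ) else h y) 0 := by
    refine hsub.congr_fun fun y => ?_
    by_cases hy : y = k <;> simp [hy, hk]
  intro y hy
  have h1 := le_hasSum hsub2 y (fun z _ => by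
    by_cases hz : z = k
    · simp [hz]
    · simp only [if_neg hz]; exact hnn z)
  rw [if_neg hy] at h1
  exact le_antisymm h1 (hnn y)

lemma HH_isSeqClosed {μ : ℤ → ℝ} (hμ0 : ∀ n, 0 ≤ μ n) (hμ1 : HasSum μ 1)
    (hirr : IsIrredMat (P μ)) : IsSeqClosed (HH μ) := by
  obtain ⟨hp, hm⟩ := phi_MM_eq_one hμ0 hμ1 hirr
  intro F g hF hconv
  have hlim : ∀ m : ℤ, Tendsto (fun j => F j m) atTop (𝓝 (g m)) :=
    fun m => (tendsto_pi_nhds.mp hconv) m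
  obtain ⟨hsup, hz⟩ := limit_supH hμ0 hF hlim
  set cp := Real.log (MM μ 1) with hcpd
  set cm := -Real.log (MM μ (-1)) with hcmd
  have hharm : ∀ x, HasSum (fun y => μ (y - x) * g y) (g x) := by
    intro x
    have hbound : Summable (fun y : ℤ =>
        μ (y - x) * (Real.exp (cp * y) + Real.exp (cm * y))) := by
      refine (((hasSum_exp_row hp x).summable).add ((hasSum_exp_row hm x).summable)).congr
        fun y => ?_
      ring
    have hDC : Tendsto (fun j => ∑' y : ℤ, μ (y - x) * F j y) atTop
        (𝓝 (∑' y : ℤ, μ (y - x) * g y)) := by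
      apply tendsto_tsum_of_dominated_convergence hbound
        (fun y => (hlim y).const_mul (μ (y - x)))
      refine Eventually.of_forall fun j y => ?_
      rw [Real.norm_eq_abs, abs_of_nonneg (mul_nonneg (hμ0 _) ((hF j).2.1 y).le)]
      exact mul_le_mul_of_nonneg_left (HH_le_dom hμ0 hμ1 hirr (hF j) y) (hμ0 _)
    have hval : (fun j : ℕ => ∑' y : ℤ, μ (y - x) * F j y) = fun j => F j x :=
      funext fun j => ((hF j).1 x).tsum_eq
    rw [hval] at hDC
    have heq : ∑' y : ℤ, μ (y - x) * g y = g x :=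
      tendsto_nhds_unique hDC (hlim x)
    exact heq ▸ (hsup.2 x).1.hasSum
  exact ⟨hharm, fun m => supH_pos hμ0 hμ1 hirr hsup hz m, hz⟩

lemma HH_convex {μ : ℤ → ℝ} : Convex ℝ (HH μ) := by
  intro f hf g hg a b ha hb hab
  refine ⟨fun x => ?_, fun m => ?_, ?_⟩
  · have h1 := ((hf.1 x).mul_left a).add ((hg.1 x).mul_left b)
    refine h1.congr_fun fun y => ?_
    simp only [Pi.add_apply, Pi.smul_apply, smul_eq_mul]
    ring
  · simp only [Pi.add_apply, Pi.smul_apply, smul_eq_mul]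
    rcases eq_or_lt_of_le ha with ha' | ha'
    · have hb1 : b = 1 := by linarith
      rw [← ha', hb1]; simpa using hg.2.1 m
    · exact add_pos_of_pos_of_nonneg (mul_pos ha' (hf.2.1 m))
        (mul_nonneg hb (hg.2.1 m).le)
  · simp only [Pi.add_apply, Pi.smul_apply, smul_eq_mul, hf.2.2, hg.2.2]
    linarith

lemma HH_isCompact {μ : ℤ → ℝ} (hμ0 : ∀ n, 0 ≤ μ n) (hμ1 : HasSum μ 1)
    (hirr : IsIrredMat (P μ)) : IsCompact (HH μ) := by
  have hC : ∀ m : ℤ, ∃ C : ℝ, 0 < C ∧ ∀ g : ℤ → ℝ, SupH μ g → g 0 = 1 → g m ≤ C :=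
    fun m => supH_upper hμ0 hμ1 hirr m
  choose C hCpos hCle using hC
  refine IsCompact.of_isClosed_subset
    (isCompact_univ_pi fun m => isCompact_Icc (a := (0:ℝ)) (b := C m))
    ((HH_isSeqClosed hμ0 hμ1 hirr).isClosed) ?_
  intro f hf
  rw [Set.mem_univ_pi]
  intro m
  exact ⟨(hf.2.1 m).le, hCle m f (mem_HH_supH hf) hf.2.2⟩

/-- multiplicativity relation of extreme points along the support -/
lemma extreme_rel_support {μ : ℤ → ℝ} (hμ0 : ∀ n, 0 ≤ μ n) (hμ1 : HasSum μ 1)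
    (hirr : IsIrredMat (P μ)) {e : ℤ → ℝ} (he : e ∈ (HH μ).extremePoints ℝ)
    {k : ℤ} (hk : 0 < μ k) : ∀ m, e (m + k) = e k * e m := by
  obtain ⟨heH, hext⟩ := he
  have hw1 : μ k * e k ≤ 1 := by
    have := le_hasSum (hasSum_HH_zero heH) k
      (fun y _ => mul_nonneg (hμ0 y) (heH.2.1 y).le)
    simpa using this
  have hw0 : 0 < μ k * e k := mul_pos hk (heH.2.1 k)
  set w := μ k * e k with hwd
  rcases lt_or_eq_of_le hw1 with hwlt | hweq
  · -- generic case
    have hstrict : ∀ m, μ k * e (k + m) < e m := by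
      intro m
      have hle : μ k * e (k + m) ≤ e m := by
        have := le_hasSum (hasSum_HH_shift heH m) k
          (fun y _ => mul_nonneg (hμ0 y) (heH.2.1 _).le)
        simpa using this
      rcases lt_or_eq_of_le hle with h | h
      · exact h
      · exfalso
        have hzero := single_of_hasSum (hasSum_HH_shift heH m)
          (fun y => mul_nonneg (hμ0 y) (heH.2.1 _).le) k h
        have hmusupp : ∀ y, y ≠ k → μ y = 0 := by
          intro y hy
          rcases mul_eq_zero.mp (hzero y hy) with h' | h'
          · exact h'
          · exact absurd h' (heH.2.1 _).ne'
        have h2 := hasSum_single (f := fun y => μ y * e y) k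
          (fun y hy => show μ y * e y = 0 by rw [hmusupp y hy]; ring)
        have h3 : (1:ℝ) = μ k * e k := (hasSum_HH_zero heH).unique h2
        rw [hwd] at hwlt
        rw [← h3] at hwlt
        exact lt_irrefl _ hwlt
    set u := T e k with hud
    have huH : u ∈ HH μ := T_mem_HH heH k
    set v : ℤ → ℝ := fun m => (e m - w * u m) / (1 - w) with hvd
    have hvu : ∀ m, w * u m = μ k * e (m + k) := by
      intro m
      rw [hud, hwd]
      simp only [T]
      field_simp [(heH.2.1 k).ne']
    have hvpos : ∀ m, 0 < v m := by
      intro m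
      rw [hvd]
      refine div_pos ?_ (by linarith)
      have hst := hstrict m
      rw [add_comm k m] at hst
      have := hvu m
      linarith
    have hvH : v ∈ HH μ := by
      refine ⟨fun x => ?_, hvpos, ?_⟩
      · have h1 := ((heH.1 x).sub ((huH.1 x).mul_left w)).div_const (1 - w)
        refine h1.congr_fun fun y => ?_
        rw [hvd]
        ring
      · rw [hvd]
        have hu0 : u 0 = 1 := huH.2.2
        simp only
        rw [heH.2.2, hu0, mul_one]
        exact div_self (ne_of_gt (by linarith : (0:ℝ) < 1 - w))
    have hseg : e ∈ openSegment ℝ u v := by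
      refine ⟨w, 1 - w, hw0, by linarith, by ring, ?_⟩
      funext m
      simp only [Pi.add_apply, Pi.smul_apply, smul_eq_mul, hvd]
      have h9 : (1 - w) * ((e m - w * u m)/(1 - w)) = e m - w * u m :=
        mul_div_cancel₀ _ (ne_of_gt (by linarith : (0:ℝ) < 1 - w))
      rw [h9]
      ring
    have hue := hext huH hvH hseg
    intro m
    have h1 : e (m + k) / e k = e m := by
      have := congrFun hue m
      rw [hud] at this
      simpa [T] using this
    rw [div_eq_iff (heH.2.1 k).ne'] at h1
    rw [h1]
    ring
  · -- degenerate case: point mass at k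
    have hzero := single_of_hasSum (hasSum_HH_zero heH)
      (fun y => mul_nonneg (hμ0 y) (heH.2.1 y).le) k hweq
    have hmusupp : ∀ y, y ≠ k → μ y = 0 := by
      intro y hy
      rcases mul_eq_zero.mp (hzero y hy) with h' | h'
      · exact h'
      · exact absurd h' (heH.2.1 y).ne'
    have hμk : μ k = 1 := by
      have := hasSum_single (f := μ) k hmusupp
      exact (hμ1.unique this).symm
    have hshift : ∀ m, e m = μ k * e (k + m) := by
      intro m
      have h2 := hasSum_single (f := fun y => μ y * e (y + m)) k
        (fun y hy => show μ y * e (y + m) = 0 by rw [hmusupp y hy]; ring)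
      have h3 : e m = μ k * e (k + m) := (hasSum_HH_shift heH m).unique h2
      exact h3
    have hek : e k = 1 := by
      have h0 := hshift 0
      rw [heH.2.2, hμk, one_mul, add_zero] at h0
      exact h0.symm
    intro m
    have h1 := hshift m
    rw [hμk, one_mul] at h1
    rw [add_comm m k, ← h1, hek, one_mul]

lemma extreme_rel_all {μ : ℤ → ℝ} (hμ0 : ∀ n, 0 ≤ μ n) (hμ1 : HasSum μ 1)
    (hirr : IsIrredMat (P μ)) {e : ℤ → ℝ} (he : e ∈ (HH μ).extremePoints ℝ) :
    ∀ k m : ℤ, e (m + k) = e k * e m := by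
  have heH := he.1
  have hadd : ∀ z w : ℤ, (∀ m, e (m + z) = e z * e m) → (∀ m, e (m + w) = e w * e m) →
      ∀ m, e (m + (w + z)) = e (w + z) * e m := by
    intro z w hz hw m
    have h1 : m + (w + z) = (m + w) + z := by ring
    rw [h1, hz (m + w), hw m]
    have h2 : w + z = w + z := rfl
    rw [hz w]
    ring
  have hreach : ∀ (n : ℕ) (k : ℤ), 0 < pstep (P μ) n 0 k →
      ∀ m, e (m + k) = e k * e m := by
    intro n
    induction n with
    | zero =>
      intro k hk m
      have hk0 : k = 0 := by
        by_contra hc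
        revert hk
        simp only [pstep]
        rw [if_neg (fun h : (0:ℤ) = k => hc h.symm)]
        exact lt_irrefl (0:ℝ)
      subst hk0
      rw [add_zero, heH.2.2, one_mul]
    | succ n ih =>
      intro k hk m
      obtain ⟨z, hz1, hz2⟩ := pstep_succ_exists_pos hμ0 n 0 k hk
      have hz := ih z hz1
      have hw := extreme_rel_support hμ0 hμ1 hirr he hz2
      have h1 := hadd z (k - z) hz hw
      rw [sub_add_cancel] at h1
      exact h1 m
  intro k m
  obtain ⟨n, hn⟩ := reach hμ0 hμ1 hirr k
  exact hreach (n+1) k hn m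

lemma extreme_eq_exp {μ : ℤ → ℝ} (hμ0 : ∀ n, 0 ≤ μ n) (hμ1 : HasSum μ 1)
    (hirr : IsIrredMat (P μ)) {e : ℤ → ℝ} (he : e ∈ (HH μ).extremePoints ℝ) :
    ∃ c : ℝ, (∀ m : ℤ, e m = Real.exp (c * m)) ∧
      HasSum (fun n : ℤ => μ n * Real.exp (c * n)) 1 := by
  have hrel : ∀ k : ℤ, e (k + 1) = e 1 * e k :=
    fun k => extreme_rel_all hμ0 hμ1 hirr he 1 k
  have hpos1 : 0 < e 1 := he.1.2.1 1
  have hform : ∀ m : ℤ, e m = Real.exp (Real.log (e 1) * m) := by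
    intro m
    rw [geom_of_rel hpos1 he.1.2.2 hrel m]
    exact zpow_eq_exp hpos1 m
  refine ⟨Real.log (e 1), hform, ?_⟩
  refine (hasSum_HH_zero he.1).congr_fun fun y => ?_
  rw [hform y]

lemma mixture_mem_HH {μ : ℤ → ℝ} (hμ1 : HasSum μ 1) {c₀ : ℝ}
    (hc₀ : HasSum (fun n : ℤ => μ n * Real.exp (c₀ * n)) 1) {t : ℝ}
    (ht : t ∈ Set.Icc (0:ℝ) 1) :
    (fun m : ℤ => t + (1 - t) * Real.exp (c₀ * m)) ∈ HH μ := by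
  obtain ⟨ht0, ht1⟩ := ht
  refine ⟨fun x => ?_, fun m => ?_, ?_⟩
  · have h1 := (hasSum_row hμ1 x).mul_left t
    have h2 := (hasSum_exp_row hc₀ x).mul_left (1 - t)
    have h3 := h1.add h2
    rw [show t * 1 + (1 - t) * (Real.exp (c₀ * x) * 1)
      = t + (1 - t) * Real.exp (c₀ * x) by ring] at h3
    refine h3.congr_fun fun y => ?_
    ring
  · rcases eq_or_lt_of_le ht1 with h | h
    · rw [h]
      norm_num
    · exact add_pos_of_nonneg_of_pos ht0 (mul_pos (by linarith) (Real.exp_pos _))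
  · simp

lemma part1_classification {μ : ℤ → ℝ} (hμ0 : ∀ n, 0 ≤ μ n) (hμ1 : HasSum μ 1)
    (hirr : IsIrredMat (P μ)) {c₀ : ℝ} (hc₀ne : c₀ ≠ 0)
    (hc₀ : HasSum (fun n : ℤ => μ n * Real.exp (c₀ * n)) 1)
    {f : ℤ → ℝ} (hf : f ∈ HH μ) :
    ∃ t : ℝ, t ∈ Set.Icc (0:ℝ) 1 ∧ ∀ m : ℤ, f m = t + (1 - t) * Real.exp (c₀ * m) := by
  have hKM := closure_convexHull_extremePoints (HH_isCompact hμ0 hμ1 hirr)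
    (HH_convex (μ := μ))
  have hsub : (HH μ).extremePoints ℝ
      ⊆ {(fun _ : ℤ => (1:ℝ)), (fun m : ℤ => Real.exp (c₀ * m))} := by
    intro e hee
    obtain ⟨c, hform, hsum⟩ := extreme_eq_exp hμ0 hμ1 hirr hee
    rcases root_cases hμ0 hμ1 hirr hc₀ne hc₀ hsum with h | h
    · left
      funext m
      rw [hform m, h]
      simp
    · right
      funext m
      rw [hform m, h]
  have hcompseg : IsCompact (segment ℝ (fun _ : ℤ => (1:ℝ)) (fun m : ℤ => Real.exp (c₀ * m))) := by
    rw [segment_eq_image]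
    apply IsCompact.image isCompact_Icc
    exact ((continuous_const.sub continuous_id).smul continuous_const).add
      (continuous_id.smul continuous_const)
  have hseg : f ∈ segment ℝ (fun _ : ℤ => (1:ℝ)) (fun m : ℤ => Real.exp (c₀ * m)) := by
    have h1 : f ∈ closure (convexHull ℝ ((HH μ).extremePoints ℝ)) := by
      rw [hKM]; exact hf
    have h2 : closure (convexHull ℝ ((HH μ).extremePoints ℝ)) ⊆
        closure (convexHull ℝ
          ({(fun _ : ℤ => (1:ℝ)), (fun m : ℤ => Real.exp (c₀ * m))} : Set (ℤ → ℝ))) :=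
      closure_mono (convexHull_mono hsub)
    have h3 := h2 h1
    rw [convexHull_pair, hcompseg.isClosed.closure_eq] at h3
    exact h3
  obtain ⟨a, b, ha, hb, hab, habf⟩ := hseg
  refine ⟨a, ⟨ha, by linarith⟩, fun m => ?_⟩
  have h4 := congrFun habf m
  simp only [Pi.add_apply, Pi.smul_apply, smul_eq_mul] at h4
  rw [← h4, show b = 1 - a by linarith]
  ring

end PHZ

/-- For an irreducible random walk `p̃(k,l) = μ̃(l-k)` on `ℤ`:
if `φ(c₀) = 1` for some `c₀ ≠ 0`, the normalized positive harmonic functions are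
precisely `m ↦ t + (1-t)e^{c₀m}`, `t ∈ [0,1]`; if `c = 0` is the only solution of
`φ(c) = 1`, every positive harmonic function is constant. -/
theorem positive_harmonic_Z (μ : ℤ → ℝ) (hμ0 : ∀ n, 0 ≤ μ n)
    (hμ1 : HasSum μ 1)
    (hirr : IsIrredMat (fun k l : ℤ => μ (l - k))) :
    (∀ c₀ : ℝ, c₀ ≠ 0 → HasSum (fun n : ℤ => μ n * Real.exp (c₀ * n)) 1 →
      ∀ f : ℤ → ℝ,
        (IsHarmonic (fun k l : ℤ => μ (l - k)) f ∧ (∀ m, 0 < f m) ∧ f 0 = 1) ↔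
          (∃ t : ℝ, t ∈ Set.Icc (0 : ℝ) 1 ∧
            ∀ m : ℤ, f m = t + (1 - t) * Real.exp (c₀ * m))) ∧
    ((∀ c : ℝ, HasSum (fun n : ℤ => μ n * Real.exp (c * n)) 1 → c = 0) →
      ∀ f : ℤ → ℝ, IsHarmonic (fun k l : ℤ => μ (l - k)) f → (∀ m, 0 < f m) →
        ∃ a : ℝ, ∀ m, f m = a) := by
  constructor
  · intro c₀ hc₀ne hc₀ f
    constructor
    · rintro ⟨hh, hp, h0⟩
      exact PHZ.part1_classification hμ0 hμ1 hirr hc₀ne hc₀ ⟨hh, hp, h0⟩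
    · rintro ⟨t, ht, hform⟩
      have hmem := PHZ.mixture_mem_HH (μ := μ) hμ1 hc₀ ht
      have hfe : f = fun m : ℤ => t + (1 - t) * Real.exp (c₀ * m) := funext hform
      rw [hfe]
      exact ⟨hmem.1, hmem.2.1, hmem.2.2⟩
  · intro hroots f hh hpos
    have hg : (fun m => f m / f 0) ∈ PHZ.HH μ := by
      refine ⟨fun x => ?_, fun m => div_pos (hpos m) (hpos 0), div_self (hpos 0).ne'⟩
      refine ((hh x).div_const (f 0)).congr_fun fun y => ?_
      ring
    have hconst := PHZ.part2_const hμ0 hμ1 hirr hroots hg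
    refine ⟨f 0, fun m => ?_⟩
    have h1 : f m / f 0 = 1 := hconst m
    rw [div_eq_one_iff_eq (hpos 0).ne'] at h1
    exact h1
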